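/- Let stNum, c, n be integers with c < stNum and stNum > 1, and let exe be a Boolean. Execute the initEventQueue program: define exe' = true if c = 0 and exe' = false otherwise; define n' = 0 if c = 0 and n' = n otherwise; define a = c; define c' = 0 if c = stNum - 1 and c' = a + 1 otherwise; and set x = c'. Then either (x = 1 and exe' = true and n' = 0), or ((x = 0 or x = a + 1) and exe' = false). -/
import Mathlib


/-- Lemma 1: correctness of the `initEventQueue` program of the two-way
communication model pattern, expressed as a Hoare triple on the deterministic
state transformer. -/
theorem initEventQueue_correct (stNum c n : ℤ) (exe : Bool)
    (h1 : c < stNum) (h2 : stNum > 1) :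
    let exe' : Bool := if c = 0 then true else false
    let n' : ℤ := if c = 0 then 0 else n
    let a : ℤ := c
    let c' : ℤ := if c = stNum - 1 then 0 else a + 1
    let x : ℤ := c'
    (x = 1 ∧ exe' = true ∧ n' = 0) ∨ ((x = 0 ∨ x = a + 1) ∧ exe' = false) := by
  intro exe2 n2 a c2 x
  by_cases h : c = 0 <;> by_cases h3 : c = stNum - 1 <;> simp [exe2, n2, a, c2, x, h, h3] <;> omega
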